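/- Let G be a group, H a subgroup of G, and T a subgroup of H such that for every g ∈ G with g⁻¹Tg ⊆ H there exists h ∈ H with g⁻¹Tg = h⁻¹Th (the conjugacy property of maximal tori of a compact connected Lie group H). Then a coset gH ∈ G/H is a fixed point of the left-translation action of T on G/H (i.e. (tg)H = gH for all t ∈ T) if and only if g ∈ N_G(T)·H. -/

import Mathlib

open scoped Pointwise

/-- For a group `G`, subgroup `H`, and a subgroup `T ≤ H` satisfying the
conjugacy property of maximal tori (any conjugate of `T` contained in `H` is conjugate to `T`
by an element of `H`), a coset `gH` is fixed by the left-translation action of `T` on `G/H`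
if and only if `g ∈ N_G(T)·H`. -/
theorem fixed_points_of_torus_action {G : Type*} [Group G] (H T : Subgroup G) (hTH : T ≤ H)
    (hconj : ∀ g : G, (∀ t ∈ T, g⁻¹ * t * g ∈ H) →
      ∃ h ∈ H, (fun t => g⁻¹ * t * g) '' (T : Set G) = (fun t => h⁻¹ * t * h) '' (T : Set G))
    (g : G) :
    (∀ t ∈ T, (t : G) • (QuotientGroup.mk g : G ⧸ H) = QuotientGroup.mk g) ↔
      g ∈ (Subgroup.normalizer (T : Set G) : Set G) * (H : Set G) := by
  have key : (∀ t ∈ T, (t : G) • (QuotientGroup.mk g : G ⧸ H) = QuotientGroup.mk g) ↔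
      (∀ t ∈ T, g⁻¹ * t * g ∈ H) := by
    constructor
    · intro hfix t ht
      have h1 : (QuotientGroup.mk (t⁻¹ * g) : G ⧸ H) = QuotientGroup.mk g :=
        hfix t⁻¹ (T.inv_mem ht)
      have := QuotientGroup.eq.mp h1
      simpa [mul_assoc] using this
    · intro hmem t ht
      show (QuotientGroup.mk (t * g) : G ⧸ H) = QuotientGroup.mk g
      rw [QuotientGroup.eq]
      have := hmem t⁻¹ (T.inv_mem ht)
      simpa [mul_assoc] using this
  rw [key]
  constructor
  · intro hmem
    obtain ⟨h, hh, heq⟩ := hconj g hmem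
    refine ⟨g * h⁻¹, ?_, h, hh, by group⟩
    show g * h⁻¹ ∈ Subgroup.normalizer (T : Set G)
    rw [Subgroup.mem_normalizer_iff'']
    intro x
    constructor
    · intro hx
      have h1 : g⁻¹ * x * g ∈ (fun t => g⁻¹ * t * g) '' (T : Set G) := ⟨x, hx, rfl⟩
      rw [heq] at h1
      obtain ⟨y, hy, hyx⟩ := h1
      have hxy : (g * h⁻¹)⁻¹ * x * (g * h⁻¹) = y := by
        have : y = h * (g⁻¹ * x * g) * h⁻¹ := by rw [← hyx]; group
        rw [this]; group
      rw [hxy]; exact hy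
    · intro hx
      -- hx : (g * h⁻¹)⁻¹ * x * (g * h⁻¹) ∈ T, i.e. h * g⁻¹ * x * g * h⁻¹ ∈ T
      have h1 : g⁻¹ * x * g ∈ (fun t => h⁻¹ * t * h) '' (T : Set G) :=
        ⟨(g * h⁻¹)⁻¹ * x * (g * h⁻¹), hx, by group⟩
      rw [← heq] at h1
      obtain ⟨y, hy, hyx⟩ := h1
      have h2 : g⁻¹ * y * g = g⁻¹ * x * g := hyx
      have hxy : y = x := mul_left_cancel (mul_right_cancel h2)
      exact hxy ▸ hy
  · rintro ⟨n, hn, h, hh, rfl⟩ t ht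
    have hn' : n ∈ Subgroup.normalizer (T : Set G) := hn
    have hnt : n⁻¹ * t * n ∈ T := (Subgroup.mem_normalizer_iff''.mp hn' t).mp ht
    have : (n * h)⁻¹ * t * (n * h) = h⁻¹ * (n⁻¹ * t * n) * h := by group
    rw [this]
    exact H.mul_mem (H.mul_mem (H.inv_mem hh) (hTH hnt)) hh
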